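/- Reparameterized form of the inverse pessimistic sigmoid: for y ∈ (0,1) and λ ≥ 0, setting u = y/(1-y), one has 2·log((λy + √(λ²y² + 4y - 4y²))/(2(1-y))) = log(u) + 2·arsinh(λ√u/2), where arsinh(z) = log(z + √(z²+1)). -/

import Mathlib

open Real

/-- Reparameterized form of the inverse pessimistic sigmoid: for `y ∈ (0,1)`
and `λ ≥ 0`, with `u = y/(1-y)`,
`2·log((λy + √(λ²y² + 4y - 4y²))/(2(1-y))) = log u + 2·arsinh(λ√u/2)`. -/
theorem inv_pess_sigmoid_arsinh (lam y : ℝ) (hlam : 0 ≤ lam)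
    (hy : y ∈ Set.Ioo (0:ℝ) 1) :
    let u : ℝ := y / (1 - y)
    2 * log ((lam * y + Real.sqrt (lam^2 * y^2 + 4*y - 4*y^2)) / (2 * (1 - y)))
      = log u + 2 * Real.arsinh (lam * Real.sqrt u / 2) := by
  obtain ⟨hy0, hy1⟩ := hy
  intro u
  have h1 : 0 < 1 - y := by linarith
  have hu : 0 < u := div_pos hy0 h1
  set s := Real.sqrt u with hs
  have hsp : 0 < s := Real.sqrt_pos.mpr hu
  have hs2 : s ^ 2 = u := Real.sq_sqrt hu.le
  have hudef : u = y / (1 - y) := rfl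
  have huy : u * (1 - y) = y := div_mul_cancel₀ _ h1.ne'
  have hs2u : s ^ 2 * (1 - y) = y := by rw [hs2]; exact huy
  set t := Real.sqrt (lam ^ 2 * u ^ 2 + 4 * u) with ht
  have htp : 0 < t := Real.sqrt_pos.mpr (by nlinarith)
  -- first sqrt identity
  have e1 : Real.sqrt (lam ^ 2 * y ^ 2 + 4 * y - 4 * y ^ 2) = (1 - y) * t := by
    rw [ht, ← Real.sqrt_sq h1.le, ← Real.sqrt_mul (sq_nonneg _)]
    congr 1
    rw [hudef]
    field_simp
    ring
  -- second sqrt identity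
  have e2 : Real.sqrt (1 + (lam * s / 2) ^ 2) = t / (2 * s) := by
    rw [eq_div_iff (by positivity), ht,
      ← Real.sqrt_sq (by positivity : (0:ℝ) ≤ 2 * s),
      ← Real.sqrt_mul (by positivity)]
    congr 1
    rw [← hs2]
    ring
  -- the argument of LHS log equals s * (arsinh argument sum)
  have key : (lam * y + Real.sqrt (lam ^ 2 * y ^ 2 + 4 * y - 4 * y ^ 2)) / (2 * (1 - y))
      = s * (lam * s / 2 + t / (2 * s)) := by
    rw [e1]
    field_simp
    linear_combination (-lam) * hs2u
  have hApos : 0 < lam * s / 2 + t / (2 * s) := by positivity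
  rw [key, Real.arsinh, e2, Real.log_mul hsp.ne' hApos.ne', hs, Real.log_sqrt hu.le]
  ring
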